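/- Let P, γ, W₊, W₋ be n×n complex Hermitian matrices such that P is an orthogonal projection (P² = P), 0 ≤ γ ≤ 1 (i.e. γ and 1 − γ are positive semidefinite), and W₊, W₋ are positive semidefinite. Set W = W₊ − W₋. Then for every δ > 0: Tr[γW] ≥ (1−δ) Tr[P W₊] − (1+δ) Tr[P W₋] − (1 + δ^{−1}) ( ‖W₊‖ + ‖W₋‖ ) Tr[γ(1−P)] − ‖W‖ Tr[P(1−γ)], where ‖·‖ denotes the operator norm and Tr the trace. -/

import Mathlib

noncomputable section

open scoped BigOperators ComplexOrder

/-- Operator (ℓ²) norm of a square complex matrix. -/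
def matOpNorm {n : ℕ} (A : Matrix (Fin n) (Fin n) ℂ) : ℝ :=
  ‖Matrix.toEuclideanCLM (𝕜 := ℂ) A‖

open Matrix

lemma trace_nonneg_of_psd {n : ℕ} {A : Matrix (Fin n) (Fin n) ℂ}
    (hA : A.PosSemidef) : 0 ≤ A.trace := by
  rw [Matrix.trace]
  refine Finset.sum_nonneg fun i _ => ?_
  have h := hA.dotProduct_mulVec_nonneg (Pi.single i 1)
  simpa [dotProduct, Matrix.mulVec, Pi.single_apply, Finset.sum_ite_eq] using h

open scoped MatrixOrder in
lemma trace_mul_psd_nonneg {n : ℕ} {A B : Matrix (Fin n) (Fin n) ℂ}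
    (hA : A.PosSemidef) (hB : B.PosSemidef) : 0 ≤ (A * B).trace := by
  have hs : CFC.sqrt A * CFC.sqrt A = A := CFC.sqrt_mul_sqrt_self A hA.nonneg
  have h1 : (CFC.sqrt A * B * CFC.sqrt A).PosSemidef := by
    have := hB.mul_mul_conjTranspose_same (CFC.sqrt A)
    rwa [(CFC.sqrt_nonneg A).posSemidef.1.eq] at this
  have h2 : (CFC.sqrt A * B * CFC.sqrt A).trace = (A * B).trace := by
    rw [Matrix.trace_mul_cycle, hs]
  rw [← h2]
  exact trace_nonneg_of_psd h1

lemma psd_norm_smul_one_sub {n : ℕ} {W : Matrix (Fin n) (Fin n) ℂ} (hW : W.IsHermitian) :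
    (((matOpNorm W : ℝ) : ℂ) • (1 : Matrix (Fin n) (Fin n) ℂ) - W).PosSemidef := by
  refine Matrix.PosSemidef.of_dotProduct_mulVec_nonneg ?_ ?_
  · refine Matrix.IsHermitian.sub ?_ hW
    simp [Matrix.IsHermitian, Matrix.conjTranspose_smul]
  · intro x
    set v : EuclideanSpace ℂ (Fin n) := (WithLp.equiv 2 _).symm x with hv
    set T := Matrix.toEuclideanCLM (𝕜 := ℂ) W with hT
    have hTv : T v = (WithLp.equiv 2 _).symm (W *ᵥ x) := by
      simp [hT, hv, Matrix.toLin'_apply]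
    have hz : dotProduct (star x) (W *ᵥ x) = inner ℂ v (T v) := by
      rw [hTv, hv,
        EuclideanSpace.inner_toLp_toLp, dotProduct_comm]
      rfl
    have hps : dotProduct (star x) x = inner ℂ v v := by
      rw [hv, EuclideanSpace.inner_toLp_toLp, dotProduct_comm]
      rfl
    have hfrm : dotProduct (star x) (((((matOpNorm W : ℝ):ℂ) • 1 - W)) *ᵥ x)
        = ((matOpNorm W : ℝ):ℂ) * (inner ℂ v v) - inner ℂ v (T v) := by
      rw [Matrix.sub_mulVec, dotProduct_sub, Matrix.smul_mulVec,
        Matrix.one_mulVec, dotProduct_smul, smul_eq_mul, hz, hps]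
    rw [hfrm]
    have hvv : (inner ℂ v v : ℂ) = ((‖v‖ : ℝ) : ℂ) ^ 2 := inner_self_eq_norm_sq_to_K v
    have hsa : star (Matrix.toEuclideanCLM (𝕜 := ℂ) W) = Matrix.toEuclideanCLM (𝕜 := ℂ) W := by
      rw [← map_star, Matrix.star_eq_conjTranspose, hW.eq]
    have hsaT : star T = T := by rw [hT]; exact hsa
    have hreal : (starRingEnd ℂ) (inner ℂ v (T v) : ℂ) = inner ℂ v (T v) := by
      rw [inner_conj_symm]
      conv_lhs => rw [← hsaT]
      rw [ContinuousLinearMap.star_eq_adjoint, ContinuousLinearMap.adjoint_inner_left]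
    have habs : ‖(inner ℂ v (T v) : ℂ)‖ ≤ matOpNorm W * ‖v‖ ^ 2 := by
      calc ‖(inner ℂ v (T v) : ℂ)‖ ≤ ‖v‖ * ‖T v‖ := norm_inner_le_norm v (T v)
        _ ≤ ‖v‖ * (‖T‖ * ‖v‖) :=
            mul_le_mul_of_nonneg_left (T.le_opNorm v) (norm_nonneg v)
        _ = matOpNorm W * ‖v‖ ^ 2 := by rw [matOpNorm, ← hT]; ring
    have him : (inner ℂ v (T v) : ℂ).im = 0 := by
      have h2 := congrArg Complex.im hreal
      rw [Complex.conj_im] at h2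
      linarith
    have hre : (inner ℂ v (T v) : ℂ).re ≤ ‖(inner ℂ v (T v) : ℂ)‖ := by
      exact Complex.re_le_norm _
    have h1 : ((matOpNorm W:ℝ):ℂ) * (inner ℂ v v : ℂ) = ((matOpNorm W * ‖v‖^2 : ℝ) : ℂ) := by
      rw [hvv]; push_cast; ring
    rw [Complex.nonneg_iff]
    constructor
    · rw [Complex.sub_re, h1, Complex.ofReal_re]
      linarith
    · rw [Complex.sub_im, h1, Complex.ofReal_im, him]
      ring

lemma trace_mul_re_le_of_psd {n : ℕ} {A W : Matrix (Fin n) (Fin n) ℂ}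
    (hA : A.PosSemidef) (hW : W.IsHermitian) :
    ((A * W).trace).re ≤ matOpNorm W * (A.trace).re := by
  have h := trace_mul_psd_nonneg hA (psd_norm_smul_one_sub hW)
  have hexp : (A * (((matOpNorm W : ℝ):ℂ) • 1 - W)).trace
      = ((matOpNorm W : ℝ):ℂ) * A.trace - (A * W).trace := by
    rw [Matrix.mul_sub, Matrix.trace_sub, Matrix.mul_smul, Matrix.mul_one,
      Matrix.trace_smul, smul_eq_mul]
  rw [hexp, Complex.nonneg_iff] at h
  have h1 := h.1
  simp only [Complex.sub_re, Complex.mul_re, Complex.ofReal_re, Complex.ofReal_im,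
    zero_mul, sub_zero] at h1
  linarith

lemma trace_inner_eq {n : ℕ} (A B : Matrix (Fin n) (Fin n) ℂ) :
    (Aᴴ * B).trace = inner ℂ ((WithLp.equiv 2 (Fin n × Fin n → ℂ)).symm
        (fun p : Fin n × Fin n => A p.1 p.2))
      ((WithLp.equiv 2 (Fin n × Fin n → ℂ)).symm (fun p : Fin n × Fin n => B p.1 p.2)) := by
  rw [EuclideanSpace.inner_toLp_toLp,
    dotProduct_comm, Matrix.trace]
  simp only [dotProduct, Matrix.diag, Matrix.mul_apply, Matrix.conjTranspose_apply,
    Pi.star_apply, RCLike.star_def, Fintype.sum_prod_type]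
  rw [Finset.sum_comm]
  rfl

lemma cs_trace {n : ℕ} (A B : Matrix (Fin n) (Fin n) ℂ) :
    ‖(Aᴴ * B).trace‖ ^ 2 ≤ ((Aᴴ * A).trace).re * ((Bᴴ * B).trace).re := by
  set f : EuclideanSpace ℂ (Fin n × Fin n) :=
    (WithLp.equiv 2 (Fin n × Fin n → ℂ)).symm (fun p : Fin n × Fin n => A p.1 p.2) with hfdef
  set g : EuclideanSpace ℂ (Fin n × Fin n) :=
    (WithLp.equiv 2 (Fin n × Fin n → ℂ)).symm (fun p : Fin n × Fin n => B p.1 p.2) with hgdef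
  have h1 : (Aᴴ * B).trace = inner ℂ f g := trace_inner_eq A B
  have hf : ((Aᴴ * A).trace).re = ‖f‖ ^ 2 := by
    rw [trace_inner_eq A A]
    change (inner ℂ f f).re = ‖f‖ ^ 2
    have := inner_self_eq_norm_sq (𝕜 := ℂ) f
    simpa using this
  have hg : ((Bᴴ * B).trace).re = ‖g‖ ^ 2 := by
    rw [trace_inner_eq B B]
    change (inner ℂ g g).re = ‖g‖ ^ 2
    have := inner_self_eq_norm_sq (𝕜 := ℂ) g
    simpa using this
  rw [h1, hf, hg]
  have h2 : ‖(inner ℂ f g : ℂ)‖ ≤ ‖f‖ * ‖g‖ := norm_inner_le_norm f g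
  nlinarith [norm_nonneg (inner ℂ f g : ℂ), norm_nonneg f, norm_nonneg g]

open scoped MatrixOrder in
lemma cs_aux {n : ℕ} {γ W : Matrix (Fin n) (Fin n) ℂ} (hγ : γ.PosSemidef) (hW : W.PosSemidef)
    (M N : Matrix (Fin n) (Fin n) ℂ) (hM : M.IsHermitian) (hN : N.IsHermitian) :
    ((((M * γ * N) * W).trace).re) ^ 2 ≤
      (((M * γ * M) * W).trace).re * (((N * γ * N) * W).trace).re := by
  set g := CFC.sqrt γ with hgdef
  set s := CFC.sqrt W with hsdef
  have hg : g * g = γ := CFC.sqrt_mul_sqrt_self γ hγ.nonneg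
  have hs : s * s = W := CFC.sqrt_mul_sqrt_self W hW.nonneg
  have hgH : gᴴ = g := (CFC.sqrt_nonneg γ).posSemidef.1.eq
  have hsH : sᴴ = s := (CFC.sqrt_nonneg W).posSemidef.1.eq
  have key : ∀ (X Y : Matrix (Fin n) (Fin n) ℂ), X.IsHermitian → Y.IsHermitian →
      ((g * (X * s))ᴴ * (g * (Y * s))).trace = ((X * γ * Y) * W).trace := by
    intro X Y hX hY
    have h1 : (g * (X * s))ᴴ * (g * (Y * s)) = s * (X * (γ * (Y * s))) := by
      simp only [Matrix.conjTranspose_mul, hX.eq, hgH, hsH, ← hg, Matrix.mul_assoc]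
    rw [h1, Matrix.trace_mul_comm, ← hs]
    congr 1
    simp only [Matrix.mul_assoc]
  have hMM := key M M hM hM
  have hNN := key N N hN hN
  have hMN := key M N hM hN
  have hcs := cs_trace (g * (M * s)) (g * (N * s))
  rw [hMM, hNN, hMN] at hcs
  have hre : ((((M * γ * N) * W).trace).re) ^ 2 ≤ ‖((M * γ * N) * W).trace‖ ^ 2 := by
    have h3 := Complex.abs_re_le_norm (((M * γ * N) * W).trace)
    nlinarith [sq_abs ((((M * γ * N) * W).trace).re), abs_nonneg ((((M * γ * N) * W).trace).re),
      norm_nonneg (((M * γ * N) * W).trace)]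
  exact hre.trans hcs

lemma amgm_aux (a c r δ : ℝ) (ha : 0 ≤ a) (hc : 0 ≤ c) (hδ : 0 < δ) (h : r ^ 2 ≤ a * c) :
    -(δ * a + δ⁻¹ * c) ≤ 2 * r := by
  have h1 : δ * δ⁻¹ = 1 := mul_inv_cancel₀ hδ.ne'
  nlinarith [sq_nonneg (δ * a - δ⁻¹ * c), mul_nonneg hδ.le ha,
    mul_nonneg (inv_pos.2 hδ).le hc, sq_nonneg (δ * a + δ⁻¹ * c + 2 * r)]

lemma cross_re_eq {n : ℕ} {P Q γ W : Matrix (Fin n) (Fin n) ℂ}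
    (hP : P.IsHermitian) (hQ : Q.IsHermitian) (hγ : γ.IsHermitian) (hW : W.IsHermitian) :
    (((Q * γ * P) * W).trace).re = (((P * γ * Q) * W).trace).re := by
  have e : ((P * γ * Q) * W)ᴴ = W * (Q * (γ * P)) := by
    simp [Matrix.conjTranspose_mul, hP.eq, hQ.eq, hγ.eq, hW.eq, Matrix.mul_assoc]
  have h1 : (((P * γ * Q) * W)ᴴ).trace = ((Q * γ * P) * W).trace := by
    rw [e, Matrix.trace_mul_comm]
    congr 1
    simp [Matrix.mul_assoc]
  rw [Matrix.trace_conjTranspose] at h1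
  rw [← h1]
  simp

theorem trace_comparison_inequality
    (n : ℕ) (P γ Wp Wm : Matrix (Fin n) (Fin n) ℂ)
    (hP : P.IsHermitian) (hPproj : P * P = P)
    (hγ0 : γ.PosSemidef) (hγ1 : (1 - γ).PosSemidef)
    (hWp : Wp.PosSemidef) (hWm : Wm.PosSemidef)
    (δ : ℝ) (hδ : 0 < δ) :
    ((γ * (Wp - Wm)).trace).re ≥
      (1 - δ) * ((P * Wp).trace).re - (1 + δ) * ((P * Wm).trace).re
      - (1 + δ⁻¹) * (matOpNorm Wp + matOpNorm Wm) * ((γ * (1 - P)).trace).re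
      - matOpNorm (Wp - Wm) * ((P * (1 - γ)).trace).re := by
  set Q : Matrix (Fin n) (Fin n) ℂ := 1 - P with hQdef
  have hQH : Q.IsHermitian := by rw [hQdef]; exact Matrix.isHermitian_one.sub hP
  have hQproj : Q * Q = Q := by
    simp only [hQdef, Matrix.mul_sub, Matrix.sub_mul, Matrix.mul_one, Matrix.one_mul, hPproj,
      sub_self, sub_zero]
  have hWH : (Wp - Wm).IsHermitian := hWp.1.sub hWm.1
  -- positive semidefiniteness facts
  have hD : (P * (1 - γ) * P).PosSemidef := by
    have := hγ1.mul_mul_conjTranspose_same P; rwa [hP.eq] at this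
  have hC : (Q * γ * Q).PosSemidef := by
    have := hγ0.mul_mul_conjTranspose_same Q; rwa [hQH.eq] at this
  have hPγP : (P * γ * P).PosSemidef := by
    have := hγ0.mul_mul_conjTranspose_same P; rwa [hP.eq] at this
  -- real quantities
  set pp := ((P * Wp).trace).re with hppdef
  set pm := ((P * Wm).trace).re with hpmdef
  set t := ((γ * Q).trace).re with htdef
  set sP := ((P * (1 - γ)).trace).re with hsPdef
  set ap := (((P * γ * P) * Wp).trace).re with hapdef
  set am := (((P * γ * P) * Wm).trace).re with hamdef
  set cp := (((Q * γ * Q) * Wp).trace).re with hcpdef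
  set cm := (((Q * γ * Q) * Wm).trace).re with hcmdef
  set rp := (((P * γ * Q) * Wp).trace).re with hrpdef
  set rm := (((P * γ * Q) * Wm).trace).re with hrmdef
  set dp' := (((P * (1 - γ) * P) * Wp).trace).re with hdpdef
  set dm' := (((P * (1 - γ) * P) * Wm).trace).re with hdmdef
  set Np := matOpNorm Wp with hNp
  set Nm := matOpNorm Wm with hNm
  set NN := matOpNorm (Wp - Wm) with hNN
  -- trace identities
  have eC : (Q * γ * Q).trace = (γ * Q).trace := by
    rw [Matrix.trace_mul_cycle, hQproj, Matrix.trace_mul_comm]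
  have eD : (P * (1 - γ) * P).trace = (P * (1 - γ)).trace := by
    rw [Matrix.trace_mul_cycle, hPproj]
  have e1 : P * γ * P = P - P * (1 - γ) * P := by
    have : P * γ * P = P * P - P * (1 - γ) * P := by noncomm_ring
    rw [this, hPproj]
  have F1p : ap = pp - dp' := by
    rw [hapdef, hppdef, hdpdef, e1, Matrix.sub_mul, Matrix.trace_sub, Complex.sub_re]
  have F1m : am = pm - dm' := by
    rw [hamdef, hpmdef, hdmdef, e1, Matrix.sub_mul, Matrix.trace_sub, Complex.sub_re]
  -- nonnegativity
  have F3p : 0 ≤ dp' := (Complex.nonneg_iff.mp (trace_mul_psd_nonneg hD hWp)).1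
  have F3m : 0 ≤ dm' := (Complex.nonneg_iff.mp (trace_mul_psd_nonneg hD hWm)).1
  have F4p : 0 ≤ ap := (Complex.nonneg_iff.mp (trace_mul_psd_nonneg hPγP hWp)).1
  have F4m : 0 ≤ am := (Complex.nonneg_iff.mp (trace_mul_psd_nonneg hPγP hWm)).1
  have F5p : 0 ≤ cp := (Complex.nonneg_iff.mp (trace_mul_psd_nonneg hC hWp)).1
  have F5m : 0 ≤ cm := (Complex.nonneg_iff.mp (trace_mul_psd_nonneg hC hWm)).1
  have ht : 0 ≤ t := by
    rw [htdef, ← eC]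
    exact (Complex.nonneg_iff.mp (trace_nonneg_of_psd hC)).1
  -- norm bounds
  have F6p : cp ≤ Np * t := by
    have := trace_mul_re_le_of_psd hC hWp.1
    rwa [eC] at this
  have F6m : cm ≤ Nm * t := by
    have := trace_mul_re_le_of_psd hC hWm.1
    rwa [eC] at this
  have F7 : dp' - dm' ≤ NN * sP := by
    have h := trace_mul_re_le_of_psd hD hWH
    rwa [eD, Matrix.mul_sub, Matrix.trace_sub, Complex.sub_re] at h
  -- Cauchy-Schwarz
  have F8p : rp ^ 2 ≤ ap * cp := cs_aux hγ0 hWp P Q hP hQH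
  have F8m : rm ^ 2 ≤ am * cm := cs_aux hγ0 hWm P Q hP hQH
  -- decomposition of the LHS
  have hsum : P * γ * P + P * γ * Q + Q * γ * P + Q * γ * Q = γ := by
    rw [hQdef]; noncomm_ring
  have hLHS : (γ * (Wp - Wm)).trace
      = ((P * γ * P) * (Wp - Wm)).trace + ((P * γ * Q) * (Wp - Wm)).trace
        + ((Q * γ * P) * (Wp - Wm)).trace + ((Q * γ * Q) * (Wp - Wm)).trace := by
    rw [← Matrix.trace_add, ← Matrix.trace_add, ← Matrix.trace_add,
      ← Matrix.add_mul, ← Matrix.add_mul, ← Matrix.add_mul, hsum]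
  have hcrp : (((Q * γ * P) * Wp).trace).re = rp := cross_re_eq hP hQH hγ0.1 hWp.1
  have hcrm : (((Q * γ * P) * Wm).trace).re = rm := cross_re_eq hP hQH hγ0.1 hWm.1
  have hLHSre : ((γ * (Wp - Wm)).trace).re
      = (ap - am) + 2 * (rp - rm) + (cp - cm) := by
    have h := congrArg Complex.re hLHS
    simp only [Matrix.mul_sub, Matrix.trace_sub, Complex.add_re, Complex.sub_re] at h
    rw [Matrix.mul_sub, Matrix.trace_sub, Complex.sub_re, h]
    simp only [← hapdef, ← hamdef, ← hcpdef, ← hcmdef, ← hrpdef, ← hrmdef]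
    rw [hcrp, hcrm]
    ring
  -- AM-GM cross-term bounds
  have h2rp : -(δ * ap + δ⁻¹ * cp) ≤ 2 * rp := amgm_aux ap cp rp δ F4p F5p hδ F8p
  have h2rm : 2 * rm ≤ δ * am + δ⁻¹ * cm := by
    have h := amgm_aux am cm (-rm) δ F4m F5m hδ (by rw [neg_sq]; exact F8m)
    linarith
  -- monotone products
  have m1 : δ * ap ≤ δ * pp := mul_le_mul_of_nonneg_left (by linarith) hδ.le
  have m2 : δ * am ≤ δ * pm := mul_le_mul_of_nonneg_left (by linarith) hδ.le
  have m3 : δ⁻¹ * cp ≤ δ⁻¹ * (Np * t) := mul_le_mul_of_nonneg_left F6p (inv_pos.2 hδ).le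
  have m4 : δ⁻¹ * cm ≤ δ⁻¹ * (Nm * t) := mul_le_mul_of_nonneg_left F6m (inv_pos.2 hδ).le
  have m5 : 0 ≤ Np * t := mul_nonneg (norm_nonneg _) ht
  rw [ge_iff_le, hLHSre]
  linarith [h2rp, h2rm, m1, m2, m3, m4, m5, F1p, F1m, F5p, F6m, F7, ht]
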